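/- arXiv:1911.07155 — 3 statements merged into one kernel-verified Lean document; each statement's English description precedes it below -/
import Mathlib

section
/- With the setup of type D_n weights: let (λ₁, λ₂) be an interlacing pair. Then for all 1 ≤ i < j ≤ n-1, |λ₁(h_{β_{i,j}}) − λ₂(h_{β_{i,j}})| ≤ 2. -/
/-- The value `λ(h_a) + ⋯ + λ(h_b)` of a weight on a sum of consecutive simple coroots. -/
def hIcc (lam : ℕ → ℤ) (a b : ℕ) : ℤ := ∑ s ∈ Finset.Icc a b, lam s

/-- Pairing of a weight with the coroot of the type-A root `α_{i,j}` in type `D_n`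
(`α_{i,n} = α_i + ⋯ + α_{n-2} + α_n`); zero if `i > j`. -/
def hA (n : ℕ) (lam : ℕ → ℤ) (i j : ℕ) : ℤ :=
  if j < i then 0 else if j = n then hIcc lam i (n - 2) + lam n else hIcc lam i j

/-- Pairing of a weight with the coroot of `β_{i,j}`:
`λ(h_{β_{i,j}}) = λ(h_{i,n-1}) + λ(h_{j,n-2}) + λ(h_n)`. -/
def hBeta (n : ℕ) (lam : ℕ → ℤ) (i j : ℕ) : ℤ :=
  hIcc lam i (n - 1) + hIcc lam j (n - 2) + lam n

/-- An interlacing pair of type `D_n` weights (weights are `ℕ → ℤ`, with values on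
indices `1,…,n`; nonnegativity and the conditions (a)–(c) are built in). -/
def Interlacing (n : ℕ) (l1 l2 : ℕ → ℤ) : Prop :=
  (∀ i, 1 ≤ i → i ≤ n → 0 ≤ l1 i ∧ 0 ≤ l2 i ∧ l1 i + l2 i ≤ 1) ∧
  (0 < l1 (n - 1) + l1 n → l2 (n - 1) + l2 n = 0) ∧
  (0 < l2 (n - 1) + l2 n → l1 (n - 1) + l1 n = 0) ∧
  (∀ i j, 1 ≤ i → i < j → j ≤ n → ¬(i = n - 1 ∧ j = n) →
    (l1 i = 1 → l1 j = 1 → ∃ s, i < s ∧ s < j ∧ l2 s = 1) ∧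
    (l2 i = 1 → l2 j = 1 → ∃ s, i < s ∧ s < j ∧ l1 s = 1))

lemma hIcc_succ (lam : ℕ → ℤ) (a b : ℕ) (h : a ≤ b + 1) :
    hIcc lam a (b + 1) = hIcc lam a b + lam (b + 1) :=
  Finset.sum_Icc_succ_top h lam

lemma hIcc_empty (lam : ℕ → ℤ) (a b : ℕ) (h : b < a) : hIcc lam a b = 0 := by
  unfold hIcc
  rw [Finset.Icc_eq_empty (by omega)]
  simp

/-- Key interval lemma, one direction: the partial difference is at most 1, and if it
equals 1 there is a witness `t` with `l1 t = 1` and no `l2`-one strictly after `t`. -/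
lemma key1 (n : ℕ) (l1 l2 : ℕ → ℤ)
    (hv : ∀ i, 1 ≤ i → i ≤ n → 0 ≤ l1 i ∧ 0 ≤ l2 i ∧ l1 i + l2 i ≤ 1)
    (hs : ∀ i j, 1 ≤ i → i < j → j ≤ n - 1 →
      l1 i = 1 → l1 j = 1 → ∃ s, i < s ∧ s < j ∧ l2 s = 1)
    (a : ℕ) (ha : 1 ≤ a) :
    ∀ b, b ≤ n - 1 →
      hIcc l1 a b - hIcc l2 a b ≤ 1 ∧
      (hIcc l1 a b - hIcc l2 a b = 1 →
        ∃ t, a ≤ t ∧ t ≤ b ∧ l1 t = 1 ∧ ∀ s, t < s → s ≤ b → l2 s = 0) := by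
  intro b
  induction b with
  | zero =>
    intro _
    rw [hIcc_empty l1 a 0 (by omega), hIcc_empty l2 a 0 (by omega)]
    exact ⟨by norm_num, by norm_num⟩
  | succ b ih =>
    intro hb
    have ihb := ih (by omega)
    by_cases hab : b + 1 < a
    · rw [hIcc_empty l1 a (b+1) hab, hIcc_empty l2 a (b+1) hab]
      exact ⟨by norm_num, by norm_num⟩
    · push_neg at hab
      have e1 := hIcc_succ l1 a b hab
      have e2 := hIcc_succ l2 a b hab
      have hvb := hv (b+1) (by omega) (by omega)
      by_cases hc1 : l1 (b+1) = 1
      · have hc2 : l2 (b+1) = 0 := by omega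
        have hDb : hIcc l1 a b - hIcc l2 a b ≤ 0 := by
          by_contra hpos
          push_neg at hpos
          have hD1 : hIcc l1 a b - hIcc l2 a b = 1 := by
            have := ihb.1; omega
          obtain ⟨t, hta, htb, ht1, htz⟩ := ihb.2 hD1
          obtain ⟨s, hs1, hs2, hs3⟩ := hs t (b+1) (by omega) (by omega) (by omega) ht1 hc1
          have := htz s hs1 (by omega)
          omega
        constructor
        · rw [e1, e2]; omega
        · intro _
          exact ⟨b+1, hab, le_refl _, hc1, fun s h1 h2 => by omega⟩
      · have hc1' : l1 (b+1) = 0 := by omega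
        constructor
        · rw [e1, e2]; have := ihb.1; omega
        · intro hD
          rw [e1, e2] at hD
          have hl2 : l2 (b+1) = 0 := by have := ihb.1; omega
          have hDb : hIcc l1 a b - hIcc l2 a b = 1 := by omega
          obtain ⟨t, hta, htb, ht1, htz⟩ := ihb.2 hDb
          refine ⟨t, hta, by omega, ht1, ?_⟩
          intro s h1 h2
          rcases Nat.lt_or_ge s (b+1) with hlt | hge
          · exact htz s h1 (by omega)
          · have : s = b + 1 := by omega
            rw [this]; exact hl2

/-- The contribution of the interval `[i, n-2]` together with index `n`. -/
lemma nPart (n : ℕ) (hn : 4 ≤ n) (l1 l2 : ℕ → ℤ) (h : Interlacing n l1 l2)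
    (i : ℕ) (hi : 1 ≤ i) (hi2 : i ≤ n - 2) :
    |(hIcc l1 i (n-2) + l1 n) - (hIcc l2 i (n-2) + l2 n)| ≤ 1 := by
  obtain ⟨hv, h21, h22, hsep⟩ := h
  have K1 := key1 n l1 l2 hv
    (fun a b h1 h2 h3 => (hsep a b h1 h2 (by omega) (by omega)).1) i hi (n-2) (by omega)
  have K2 := key1 n l2 l1 (fun x h1 h2 => by have := hv x h1 h2; omega)
    (fun a b h1 h2 h3 => (hsep a b h1 h2 (by omega) (by omega)).2) i hi (n-2) (by omega)
  obtain ⟨K1a, K1b⟩ := K1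
  obtain ⟨K2a, K2b⟩ := K2
  have hvn := hv n (by omega) (le_refl n)
  have hvn1 := hv (n-1) (by omega) (by omega)
  rw [abs_le]
  by_cases hc1 : l1 n = 1
  · have hz : l2 (n-1) + l2 n = 0 := h21 (by omega)
    have hz1 : l2 (n-1) = 0 := by omega
    have hz2 : l2 n = 0 := by omega
    have hDb : hIcc l1 i (n-2) - hIcc l2 i (n-2) ≤ 0 := by
      by_contra hpos
      push_neg at hpos
      have hD1 : hIcc l1 i (n-2) - hIcc l2 i (n-2) = 1 := by have := K1a; omega
      obtain ⟨t, hta, htb, ht1, htz⟩ := K1b hD1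
      clear K1b K2b
      have ht0 : 1 ≤ t := by omega
      have htn : t < n := by omega
      have htne : ¬(t = n - 1 ∧ n = n) := by omega
      obtain ⟨s, hs1, hs2, hs3⟩ := (hsep t n ht0 htn (le_refl n) htne).1 ht1 hc1
      rcases Nat.lt_or_ge s (n-1) with hlt | hge
      · have hsb : s ≤ n - 2 := by omega
        have := htz s hs1 hsb; omega
      · have : s = n - 1 := by omega
        rw [this] at hs3; omega
    clear K1b K2b
    have := K2a
    constructor <;> omega
  · by_cases hc2 : l2 n = 1
    · have hz : l1 (n-1) + l1 n = 0 := h22 (by omega)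
      have hz1 : l1 (n-1) = 0 := by omega
      have hz2 : l1 n = 0 := by omega
      have hDb : hIcc l2 i (n-2) - hIcc l1 i (n-2) ≤ 0 := by
        by_contra hpos
        push_neg at hpos
        have hD1 : hIcc l2 i (n-2) - hIcc l1 i (n-2) = 1 := by have := K2a; omega
        obtain ⟨t, hta, htb, ht1, htz⟩ := K2b hD1
        clear K1b K2b
        have ht0 : 1 ≤ t := by omega
        have htn : t < n := by omega
        have htne : ¬(t = n - 1 ∧ n = n) := by omega
        obtain ⟨s, hs1, hs2, hs3⟩ := (hsep t n ht0 htn (le_refl n) htne).2 ht1 hc2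
        rcases Nat.lt_or_ge s (n-1) with hlt | hge
        · have hsb : s ≤ n - 2 := by omega
          have := htz s hs1 hsb; omega
        · have : s = n - 1 := by omega
          rw [this] at hs3; omega
      clear K1b K2b
      have := K1a
      constructor <;> omega
    · have hc1' : l1 n = 0 := by omega
      have hc2' : l2 n = 0 := by omega
      clear K1b K2b
      have := K1a
      have := K2a
      constructor <;> omega

/-- For any interlacing pair in type `D_n`, `|λ₁(h_{β_{i,j}}) − λ₂(h_{β_{i,j}})| ≤ 2`. -/
theorem stmt2 (n : ℕ) (hn : 4 ≤ n) (l1 l2 : ℕ → ℤ) (h : Interlacing n l1 l2) :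
    ∀ i j, 1 ≤ i → i < j → j ≤ n - 1 → |hBeta n l1 i j - hBeta n l2 i j| ≤ 2 := by
  intro i j hi hij hj
  have hi2 : i ≤ n - 2 := by omega
  have A := nPart n hn l1 l2 h i hi hi2
  obtain ⟨hv, h21, h22, hsep⟩ := h
  have B1 := key1 n l1 l2 hv
    (fun a b h1 h2 h3 => (hsep a b h1 h2 (by omega) (by omega)).1) j (by omega) (n-1)
    (le_refl _)
  have B2 := key1 n l2 l1 (fun x h1 h2 => by have := hv x h1 h2; omega)
    (fun a b h1 h2 h3 => (hsep a b h1 h2 (by omega) (by omega)).2) j (by omega) (n-1)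
    (le_refl _)
  have B1' := B1.1
  have B2' := B2.1
  clear B1 B2
  have hn1 : n - 1 = (n - 2) + 1 := by omega
  have eI1 : hIcc l1 i (n-1) = hIcc l1 i (n-2) + l1 (n-1) := by
    rw [hn1]; exact hIcc_succ l1 i (n-2) (by omega)
  have eI2 : hIcc l2 i (n-1) = hIcc l2 i (n-2) + l2 (n-1) := by
    rw [hn1]; exact hIcc_succ l2 i (n-2) (by omega)
  have eJ1 : hIcc l1 j (n-1) = hIcc l1 j (n-2) + l1 (n-1) := by
    rw [hn1]; exact hIcc_succ l1 j (n-2) (by omega)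
  have eJ2 : hIcc l2 j (n-1) = hIcc l2 j (n-2) + l2 (n-1) := by
    rw [hn1]; exact hIcc_succ l2 j (n-2) (by omega)
  rw [eJ1, eJ2] at B1' B2'
  rw [abs_le] at A
  unfold hBeta
  rw [eI1, eI2, abs_le]
  constructor <;> [ (have := A.1; omega); (have := A.2; omega) ]
end

section
/- Let (λ₁, λ₂) be an interlacing pair of type D_n weights with λ₁(h_{n-1}) + λ₁(h_n) = 2 (so λ₁(h_{n-1}) = λ₁(h_n) = 1 and λ₂(h_{n-1}) = λ₂(h_n) = 0). Then for 1 ≤ i < j ≤ n-1: |λ₁(h_{β_{i,j}}) − λ₂(h_{β_{i,j}})| = 2 if and only if (λ₁ − λ₂)(h_{i,n-2}) = 0 and (λ₁ − λ₂)(h_{j,n-2}) = 0, where (λ₁−λ₂)(h_{a,b}) = Σ_{s=a}^{b} (λ₁(h_s) − λ₂(h_s)). Moreover, in this situation λ₁(h_{β_{i,j}}) − λ₂(h_{β_{i,j}}) ≥ 0 always. -/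
lemma hIcc_split (lam : ℕ → ℤ) (a b : ℕ) (hab : a ≤ b) :
    hIcc lam a b = lam a + hIcc lam (a+1) b := by
  unfold hIcc
  rw [Finset.Icc_eq_cons_Ioc hab, Finset.sum_cons, Finset.Icc_add_one_left_eq_Ioc]

lemma hIcc_single (lam : ℕ → ℤ) (a : ℕ) : hIcc lam a a = lam a := by
  simp [hIcc]

lemma hIcc_top (lam : ℕ → ℤ) (a b : ℕ) (hab : a ≤ b + 1) :
    hIcc lam a (b+1) = hIcc lam a b + lam (b+1) := by
  unfold hIcc
  rw [← Finset.sum_Icc_succ_top hab]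

lemma keyQ (n : ℕ) (hn : 4 ≤ n) (l1 l2 : ℕ → ℤ) (h : Interlacing n l1 l2)
    (hl1 : l1 (n-1) = 1) (hl2 : l2 (n-1) = 0) :
    ∀ m a, 1 ≤ a → a + m = n - 1 →
      (hIcc l1 a (n-1) - hIcc l2 a (n-1) = 1 ∧
        ∃ t, a ≤ t ∧ t ≤ n-1 ∧ l1 t = 1 ∧ ∀ s, a ≤ s → s < t → l2 s = 0) ∨
      (hIcc l1 a (n-1) - hIcc l2 a (n-1) = 0 ∧
        ∃ t, a ≤ t ∧ t ≤ n-1 ∧ l2 t = 1 ∧ ∀ s, a ≤ s → s < t → l1 s = 0) := by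
  intro m
  induction m with
  | zero =>
    intro a ha hsum
    have : a = n - 1 := by omega
    subst this
    left
    refine ⟨by rw [hIcc_single, hIcc_single, hl1, hl2]; ring,
      n-1, le_refl _, le_refl _, hl1, fun s hs1 hs2 => absurd (lt_of_le_of_lt hs1 hs2) (lt_irrefl _)⟩
  | succ m ih =>
    intro a ha hsum
    have hsplit1 := hIcc_split l1 a (n-1) (by omega)
    have hsplit2 := hIcc_split l2 a (n-1) (by omega)
    have IH := ih (a+1) (by omega) (by omega)
    obtain ⟨h01a, h02a, hsuma⟩ := h.1 a ha (by omega)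
    rcases (show (l1 a = 0 ∧ l2 a = 0) ∨ (l1 a = 1 ∧ l2 a = 0) ∨ (l1 a = 0 ∧ l2 a = 1)
      by omega) with ⟨e1, e2⟩ | ⟨e1, e2⟩ | ⟨e1, e2⟩
    · -- no mark at a: invariant passes through
      rcases IH with ⟨hE, t, ht1, ht2, ht3, ht4⟩ | ⟨hE, t, ht1, ht2, ht3, ht4⟩
      · left
        refine ⟨by omega, t, by omega, ht2, ht3, fun s hs1 hs2 => ?_⟩
        rcases Nat.eq_or_lt_of_le hs1 with rfl | h'
        · exact e2
        · exact ht4 s h' hs2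
      · right
        refine ⟨by omega, t, by omega, ht2, ht3, fun s hs1 hs2 => ?_⟩
        rcases Nat.eq_or_lt_of_le hs1 with rfl | h'
        · exact e1
        · exact ht4 s h' hs2
    · -- l1-mark at a: forces E(a+1) = 0
      rcases IH with ⟨hE, t, ht1, ht2, ht3, ht4⟩ | ⟨hE, t, ht1, ht2, ht3, ht4⟩
      · exfalso
        obtain ⟨s, hs1, hs2, hs3⟩ :=
          (h.2.2.2 a t ha (by omega) (by omega) (fun ⟨_, ht⟩ => by omega)).1 e1 ht3
        have := ht4 s (by omega) hs2
        omega
      · left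
        exact ⟨by omega, a, le_refl _, by omega, e1,
          fun s hs1 hs2 => absurd (lt_of_le_of_lt hs1 hs2) (lt_irrefl _)⟩
    · -- l2-mark at a: forces E(a+1) = 1
      rcases IH with ⟨hE, t, ht1, ht2, ht3, ht4⟩ | ⟨hE, t, ht1, ht2, ht3, ht4⟩
      · right
        exact ⟨by omega, a, le_refl _, by omega, e2,
          fun s hs1 hs2 => absurd (lt_of_le_of_lt hs1 hs2) (lt_irrefl _)⟩
      · exfalso
        obtain ⟨s, hs1, hs2, hs3⟩ :=
          (h.2.2.2 a t ha (by omega) (by omega) (fun ⟨_, ht⟩ => by omega)).2 e2 ht3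
        have := ht4 s (by omega) hs2
        omega

/-- If `λ₁(h_{n-1}) + λ₁(h_n) = 2` for an interlacing pair, then
`|λ₁(h_{β_{i,j}}) − λ₂(h_{β_{i,j}})| = 2` iff `(λ₁−λ₂)(h_{i,n-2}) = 0 = (λ₁−λ₂)(h_{j,n-2})`;
moreover the difference is always nonnegative. -/
theorem stmt4 (n : ℕ) (hn : 4 ≤ n) (l1 l2 : ℕ → ℤ) (h : Interlacing n l1 l2)
    (h1 : l1 (n - 1) + l1 n = 2) :
    ∀ i j, 1 ≤ i → i < j → j ≤ n - 1 →
      ((|hBeta n l1 i j - hBeta n l2 i j| = 2 ↔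
          (hIcc l1 i (n - 2) - hIcc l2 i (n - 2) = 0 ∧
            hIcc l1 j (n - 2) - hIcc l2 j (n - 2) = 0)) ∧
        0 ≤ hBeta n l1 i j - hBeta n l2 i j) := by
  obtain ⟨k11, k12, k13⟩ := h.1 (n-1) (by omega) (by omega)
  obtain ⟨k21, k22, k23⟩ := h.1 n (by omega) (le_refl n)
  have hl1n1 : l1 (n-1) = 1 := by omega
  have hl1n : l1 n = 1 := by omega
  have hz : l2 (n-1) + l2 n = 0 := h.2.1 (by omega)
  have hl2n1 : l2 (n-1) = 0 := by omega
  have hl2n : l2 n = 0 := by omega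
  intro i j hi hij hj
  have hEi : hIcc l1 i (n-1) - hIcc l2 i (n-1) = 1 ∨
      hIcc l1 i (n-1) - hIcc l2 i (n-1) = 0 := by
    rcases keyQ n hn l1 l2 h hl1n1 hl2n1 (n-1-i) i hi (by omega) with ⟨hE, _⟩ | ⟨hE, _⟩ <;>
      [left; right] <;> exact hE
  have hEj : hIcc l1 j (n-1) - hIcc l2 j (n-1) = 1 ∨
      hIcc l1 j (n-1) - hIcc l2 j (n-1) = 0 := by
    rcases keyQ n hn l1 l2 h hl1n1 hl2n1 (n-1-j) j (by omega) (by omega) with ⟨hE, _⟩ | ⟨hE, _⟩ <;>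
      [left; right] <;> exact hE
  have E1 : hIcc l1 i (n-1) = hIcc l1 i (n-2) + l1 (n-1) := by
    rw [show n-1 = n-2+1 by omega]; exact hIcc_top l1 i (n-2) (by omega)
  have E2 : hIcc l2 i (n-1) = hIcc l2 i (n-2) + l2 (n-1) := by
    rw [show n-1 = n-2+1 by omega]; exact hIcc_top l2 i (n-2) (by omega)
  have E3 : hIcc l1 j (n-1) = hIcc l1 j (n-2) + l1 (n-1) := by
    rw [show n-1 = n-2+1 by omega]; exact hIcc_top l1 j (n-2) (by omega)
  have E4 : hIcc l2 j (n-1) = hIcc l2 j (n-2) + l2 (n-1) := by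
    rw [show n-1 = n-2+1 by omega]; exact hIcc_top l2 j (n-2) (by omega)
  unfold hBeta
  constructor
  · rw [abs_eq (by norm_num : (0:ℤ) ≤ 2)]
    omega
  · omega
end

section
/- Let (λ₁, λ₂) be an interlacing pair of type D_n weights with R(λ₁,λ₂) nonempty. Then there exists β* ∈ R(λ₁,λ₂) such that for every β ∈ R(λ₁,λ₂), the element β − β* is either zero, a positive root, or a sum of two positive roots of the D_n root system. -/
/-- Coefficient function (on simple roots) of `α_{a,b} = α_a + ⋯ + α_b`; zero if `a > b`. -/
def alphaCoeff (a b k : ℕ) : ℤ := if a ≤ k ∧ k ≤ b then 1 else 0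

/-- Coefficient function of `β_{i,j} = α_i + ⋯ + α_{j-1} + 2(α_j + ⋯ + α_{n-2}) + α_{n-1} + α_n`. -/
def betaCoeff (n i j k : ℕ) : ℤ :=
  (if i ≤ k ∧ k ≤ j - 1 then 1 else 0) + 2 * (if j ≤ k ∧ k ≤ n - 2 then 1 else 0) +
    (if k = n - 1 ∨ k = n then 1 else 0)

/-- Coefficient function of the type-A positive root `α_{i,j}` of `D_n`
(`α_{i,n} = α_i + ⋯ + α_{n-2} + α_n`). -/
def alphaACoeff (n i j : ℕ) : ℕ → ℤ := fun k =>
  if j = n then (if (i ≤ k ∧ k ≤ n - 2) ∨ k = n then 1 else 0)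
  else (if i ≤ k ∧ k ≤ j then 1 else 0)

/-- A coefficient function is a positive root of `D_n`. -/
def IsPosRootD (n : ℕ) (f : ℕ → ℤ) : Prop :=
  (∃ i j, 1 ≤ i ∧ i ≤ j ∧ j ≤ n ∧ ∀ k, f k = alphaACoeff n i j k) ∨
  (∃ i j, 1 ≤ i ∧ i < j ∧ j ≤ n - 1 ∧ ∀ k, f k = betaCoeff n i j k)

private lemma vals {n : ℕ} {l1 l2 : ℕ → ℤ} (h : Interlacing n l1 l2) {i : ℕ}
    (h1 : 1 ≤ i) (h2 : i ≤ n) :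
    (l1 i = 0 ∨ l1 i = 1) ∧ (l2 i = 0 ∨ l2 i = 1) ∧ l1 i + l2 i ≤ 1 := by
  obtain ⟨a, b, c⟩ := h.1 i h1 h2
  exact ⟨by omega, by omega, c⟩

private lemma key {n : ℕ} {l1 l2 : ℕ → ℤ} (hn : 4 ≤ n) (h : Interlacing n l1 l2) :
    ∀ b, b ≤ n - 1 → ∀ a, 1 ≤ a →
      (-1 ≤ ∑ s ∈ Finset.Icc a b, (l1 s - l2 s) ∧ ∑ s ∈ Finset.Icc a b, (l1 s - l2 s) ≤ 1) ∧
      (∑ s ∈ Finset.Icc a b, (l1 s - l2 s) = 1 →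
        ∃ t, a ≤ t ∧ t ≤ b ∧ l1 t = 1 ∧ ∀ s, t < s → s ≤ b → l1 s - l2 s = 0) ∧
      (∑ s ∈ Finset.Icc a b, (l1 s - l2 s) = -1 →
        ∃ t, a ≤ t ∧ t ≤ b ∧ l2 t = 1 ∧ ∀ s, t < s → s ≤ b → l1 s - l2 s = 0) := by
  intro b
  induction b with
  | zero =>
    intro _ a ha
    rw [Finset.Icc_eq_empty (by omega), Finset.sum_empty]
    exact ⟨⟨by norm_num, by norm_num⟩, fun hh => absurd hh (by norm_num),
      fun hh => absurd hh (by norm_num)⟩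
  | succ b IH =>
    intro hb a ha
    by_cases hab : b + 1 < a
    · rw [Finset.Icc_eq_empty (by omega), Finset.sum_empty]
      exact ⟨⟨by norm_num, by norm_num⟩, fun hh => absurd hh (by norm_num),
        fun hh => absurd hh (by norm_num)⟩
    · push_neg at hab
      rw [Finset.sum_Icc_succ_top hab]
      obtain ⟨⟨hA1, hA2⟩, hAp, hAm⟩ := IH (by omega) a ha
      have hb1 : 1 ≤ b + 1 := by omega
      have hbn : b + 1 ≤ n := Nat.le_trans hb (Nat.sub_le n 1)
      obtain ⟨h1v, h2v, hsv⟩ := vals h hb1 hbn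
      rcases h1v with e1 | e1 <;> rcases h2v with e2 | e2
      · -- both zero
        rw [e1, e2]
        refine ⟨⟨by omega, by omega⟩, ?_, ?_⟩
        · intro hh
          obtain ⟨t, ht1, ht2, ht3, ht4⟩ := hAp (by omega)
          have ht2' : t ≤ b + 1 := by omega
          refine ⟨t, ht1, ht2', ht3, fun s hs hs' => ?_⟩
          rcases Nat.lt_or_ge s (b+1) with hc | hc
          · exact ht4 s hs (by omega)
          · have hsb : s = b + 1 := by omega
            rw [hsb, e1, e2]; ring
        · intro hh
          obtain ⟨t, ht1, ht2, ht3, ht4⟩ := hAm (by omega)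
          have ht2' : t ≤ b + 1 := by omega
          refine ⟨t, ht1, ht2', ht3, fun s hs hs' => ?_⟩
          rcases Nat.lt_or_ge s (b+1) with hc | hc
          · exact ht4 s hs (by omega)
          · have hsb : s = b + 1 := by omega
            rw [hsb, e1, e2]; ring
      · -- l1 = 0, l2 = 1 : d = -1, need A ≥ 0
        have hA0 : 0 ≤ ∑ s ∈ Finset.Icc a b, (l1 s - l2 s) := by
          by_contra hc
          obtain ⟨t, ht1, ht2, ht3, ht4⟩ := hAm (by omega)
          have c1 : 1 ≤ t := by omega
          have c2 : t < b + 1 := by omega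
          have c3 : ¬(t = n - 1 ∧ b + 1 = n) := by omega
          obtain ⟨s, hs1, hs2, hs3⟩ := (h.2.2.2 t (b+1) c1 c2 hbn c3).2 ht3 e2
          have d1 : 1 ≤ s := by omega
          have d2 : s ≤ n := by omega
          have hvs := vals h d1 d2
          have : l1 s - l2 s = 0 := ht4 s hs1 (by omega)
          omega
        rw [e1, e2]
        refine ⟨⟨by omega, by omega⟩, fun hh => absurd hh (by omega), ?_⟩
        intro hh
        have hle : (b+1 : ℕ) ≤ b + 1 := le_refl _
        refine ⟨b+1, hab, hle, e2, fun s hs hs' => ?_⟩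
        exact absurd hs' (by omega)
      · -- l1 = 1, l2 = 0 : d = 1, need A ≤ 0
        have hA0 : ∑ s ∈ Finset.Icc a b, (l1 s - l2 s) ≤ 0 := by
          by_contra hc
          obtain ⟨t, ht1, ht2, ht3, ht4⟩ := hAp (by omega)
          have c1 : 1 ≤ t := by omega
          have c2 : t < b + 1 := by omega
          have c3 : ¬(t = n - 1 ∧ b + 1 = n) := by omega
          obtain ⟨s, hs1, hs2, hs3⟩ := (h.2.2.2 t (b+1) c1 c2 hbn c3).1 ht3 e1
          have d1 : 1 ≤ s := by omega
          have d2 : s ≤ n := by omega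
          have hvs := vals h d1 d2
          have : l1 s - l2 s = 0 := ht4 s hs1 (by omega)
          omega
        rw [e1, e2]
        refine ⟨⟨by omega, by omega⟩, ?_, fun hh => absurd hh (by omega)⟩
        intro hh
        have hle : (b+1 : ℕ) ≤ b + 1 := le_refl _
        refine ⟨b+1, hab, hle, e1, fun s hs hs' => ?_⟩
        exact absurd hs' (by omega)
      · exact absurd hsv (by omega)

private lemma keyT {n : ℕ} {l1 l2 : ℕ → ℤ} (hn : 4 ≤ n) (h : Interlacing n l1 l2)
    {x : ℕ} (hx1 : 1 ≤ x) (hx2 : x ≤ n - 2) :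
    (∑ s ∈ Finset.Icc x (n-1), (l1 s - l2 s) + (l1 n - l2 n) ≤ 2) ∧
    (∑ s ∈ Finset.Icc x (n-1), (l1 s - l2 s) + (l1 n - l2 n) = 2 →
      ∀ y, 1 ≤ y → ∑ s ∈ Finset.Icc y (n-2), (l1 s - l2 s) ≤ 0) := by
  have e : n - 2 + 1 = n - 1 := by omega
  have hxe : x ≤ n - 2 + 1 := by omega
  have hsplit : ∑ s ∈ Finset.Icc x (n-1), (l1 s - l2 s)
      = ∑ s ∈ Finset.Icc x (n-2), (l1 s - l2 s) + (l1 (n-1) - l2 (n-1)) := by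
    rw [← e]; exact Finset.sum_Icc_succ_top hxe _
  have hn2 : n - 2 ≤ n - 1 := by omega
  obtain ⟨hA1, hA2⟩ := (key hn h (n-2) hn2 x hx1).1
  have q1 : 1 ≤ n - 1 := by omega
  have q2 : n - 1 ≤ n := by omega
  have q3 : 1 ≤ n := by omega
  have hv1 := vals h q1 q2
  have hv2 := vals h q3 (le_refl n)
  -- under l1 (n-1) = 1, every sum over [y, n-2] is ≤ 0
  have claim : l1 (n-1) = 1 → ∀ y, 1 ≤ y → ∑ s ∈ Finset.Icc y (n-2), (l1 s - l2 s) ≤ 0 := by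
    intro h1 y hy
    by_contra hc
    push_neg at hc
    have hB2 := ((key hn h (n-2) hn2 y hy).1).2
    have hB1 : ∑ s ∈ Finset.Icc y (n-2), (l1 s - l2 s) = 1 := by omega
    obtain ⟨t, ht1, ht2, ht3, ht4⟩ := (key hn h (n-2) hn2 y hy).2.1 hB1
    have c1 : 1 ≤ t := by omega
    have c2 : t < n - 1 := by omega
    have c3 : n - 1 ≤ n := by omega
    have c4 : ¬(t = n - 1 ∧ n - 1 = n) := by omega
    obtain ⟨s, hs1, hs2, hs3⟩ := (h.2.2.2 t (n-1) c1 c2 c3 c4).1 ht3 h1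
    have d1 : 1 ≤ s := by omega
    have d2 : s ≤ n := by omega
    have hvs := vals h d1 d2
    have d3 : s ≤ n - 2 := by omega
    have : l1 s - l2 s = 0 := ht4 s hs1 d3
    omega
  by_cases hd : l1 (n-1) = 1 ∧ l1 n = 1
  · have hpos : 0 < l1 (n-1) + l1 n := by omega
    have hl2 : l2 (n-1) + l2 n = 0 := h.2.1 hpos
    have hx0 : ∑ s ∈ Finset.Icc x (n-2), (l1 s - l2 s) ≤ 0 := claim hd.1 x hx1
    constructor
    · rw [hsplit]; omega
    · intro _; exact claim hd.1
  · -- not double : total ≤ 1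
    have hT1 : ∑ s ∈ Finset.Icc x (n-1), (l1 s - l2 s) + (l1 n - l2 n) ≤ 1 := by
      by_cases hone : l1 (n-1) + l1 n = 1
      · have hpos : 0 < l1 (n-1) + l1 n := by omega
        have hl2 : l2 (n-1) + l2 n = 0 := h.2.1 hpos
        have hA0 : ∑ s ∈ Finset.Icc x (n-2), (l1 s - l2 s) ≤ 0 := by
          by_contra hc
          push_neg at hc
          have hA1' : ∑ s ∈ Finset.Icc x (n-2), (l1 s - l2 s) = 1 := by omega
          obtain ⟨t, ht1, ht2, ht3, ht4⟩ := (key hn h (n-2) hn2 x hx1).2.1 hA1'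
          have hsp : l1 (n-1) = 1 ∨ l1 n = 1 := by omega
          rcases hsp with h1 | h1
          · have c1 : 1 ≤ t := by omega
            have c2 : t < n - 1 := by omega
            have c3 : n - 1 ≤ n := by omega
            have c4 : ¬(t = n - 1 ∧ n - 1 = n) := by omega
            obtain ⟨s, hs1, hs2, hs3⟩ := (h.2.2.2 t (n-1) c1 c2 c3 c4).1 ht3 h1
            have d1 : 1 ≤ s := by omega
            have d2 : s ≤ n := by omega
            have hvs := vals h d1 d2
            have d3 : s ≤ n - 2 := by omega
            have : l1 s - l2 s = 0 := ht4 s hs1 d3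
            omega
          · have c1 : 1 ≤ t := by omega
            have c2 : t < n := by omega
            have c4 : ¬(t = n - 1 ∧ n = n) := by omega
            obtain ⟨s, hs1, hs2, hs3⟩ := (h.2.2.2 t n c1 c2 (le_refl n) c4).1 ht3 h1
            have d1 : 1 ≤ s := by omega
            have d2 : s ≤ n := by omega
            have hvs := vals h d1 d2
            have hsp2 : s ≤ n - 2 ∨ s = n - 1 := by omega
            rcases hsp2 with hc2 | hc2
            · have : l1 s - l2 s = 0 := ht4 s hs1 hc2
              omega
            · rw [hc2] at hs3; omega
        rw [hsplit]; omega
      · have h0 : l1 (n-1) + l1 n = 0 := by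
          rcases hv1.1 with a1 | a1 <;> rcases hv2.1 with a2 | a2 <;> omega
        rw [hsplit]; omega
    exact ⟨by omega, fun hh => absurd hh (by omega)⟩

private lemma sumdiff {n : ℕ} (f : ℕ → ℤ) {i i' : ℕ} (hn : 4 ≤ n) (h1 : i < i')
    (h2 : i' ≤ n - 1) :
    ∑ s ∈ Finset.Icc i (n-1), f s
      = ∑ s ∈ Finset.Icc i (i'-1), f s + ∑ s ∈ Finset.Icc i' (n-1), f s := by
  have e1 : Finset.Icc i (n-1) = Finset.Ico i n := by
    rw [← Finset.Ico_add_one_right_eq_Icc]; congr 1; omega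
  have e2 : Finset.Icc i (i'-1) = Finset.Ico i i' := by
    rw [← Finset.Ico_add_one_right_eq_Icc]; congr 1; omega
  have e3 : Finset.Icc i' (n-1) = Finset.Ico i' n := by
    rw [← Finset.Ico_add_one_right_eq_Icc]; congr 1; omega
  rw [e1, e2, e3]
  exact (Finset.sum_Ico_consecutive f (by omega) (by omega)).symm

private lemma Ddef {n : ℕ} (l1 l2 : ℕ → ℤ) (i j : ℕ) :
    hBeta n l1 i j - hBeta n l2 i j
      = (∑ s ∈ Finset.Icc i (n-1), (l1 s - l2 s))
        + (∑ s ∈ Finset.Icc j (n-2), (l1 s - l2 s)) + (l1 n - l2 n) := by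
  unfold hBeta hIcc
  rw [Finset.sum_sub_distrib, Finset.sum_sub_distrib]
  ring

private lemma swap {n : ℕ} {l1 l2 : ℕ → ℤ} (h : Interlacing n l1 l2) :
    Interlacing n l2 l1 := by
  obtain ⟨h1, h2, h3, h4⟩ := h
  refine ⟨fun i a b => ?_, h3, h2, fun i j a b c d => ⟨(h4 i j a b c d).2, (h4 i j a b c d).1⟩⟩
  obtain ⟨x, y, z⟩ := h1 i a b
  exact ⟨y, x, by omega⟩

/-- If both pairs have difference +2 and `i ≤ i0`, then `(i0, j)` also has difference +2. -/

private lemma push {n : ℕ} {l1 l2 : ℕ → ℤ} (hn : 4 ≤ n) (h : Interlacing n l1 l2)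
    {i j i0 j0 : ℕ} (hi : 1 ≤ i) (hij : i < j) (hj : j ≤ n - 1)
    (hi0 : 1 ≤ i0) (hij0 : i0 < j0) (hj0 : j0 ≤ n - 1) (hii0 : i ≤ i0)
    (hD : hBeta n l1 i j - hBeta n l2 i j = 2)
    (hD0 : hBeta n l1 i0 j0 - hBeta n l2 i0 j0 = 2) :
    hBeta n l1 i0 j - hBeta n l2 i0 j = 2 := by
  rw [Ddef] at hD hD0 ⊢
  have hjn : 1 ≤ j := by omega
  have hj0n : 1 ≤ j0 := by omega
  have hn2 : n - 2 ≤ n - 1 := by omega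
  have hSj := (key hn h (n-2) hn2 j hjn).1
  have hSj0 := (key hn h (n-2) hn2 j0 hj0n).1
  have hin2 : i ≤ n - 2 := by omega
  have hi0n2 : i0 ≤ n - 2 := by omega
  have hTi := keyT hn h hi hin2
  have hTi0 := keyT hn h hi0 hi0n2
  -- show the two T values are equal
  have hTeq : ∑ s ∈ Finset.Icc i (n-1), (l1 s - l2 s) + (l1 n - l2 n)
      = ∑ s ∈ Finset.Icc i0 (n-1), (l1 s - l2 s) + (l1 n - l2 n) := by
    by_cases hT2 : ∑ s ∈ Finset.Icc i (n-1), (l1 s - l2 s) + (l1 n - l2 n) = 2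
    · have hS0 : ∑ s ∈ Finset.Icc j0 (n-2), (l1 s - l2 s) ≤ 0 := hTi.2 hT2 j0 hj0n
      have := hTi0.1
      omega
    · have hT1 : ∑ s ∈ Finset.Icc i (n-1), (l1 s - l2 s) + (l1 n - l2 n) = 1 := by
        have := hTi.1
        omega
      by_cases hT2' : ∑ s ∈ Finset.Icc i0 (n-1), (l1 s - l2 s) + (l1 n - l2 n) = 2
      · have hS0 : ∑ s ∈ Finset.Icc j (n-2), (l1 s - l2 s) ≤ 0 := hTi0.2 hT2' j hjn
        omega
      · have := hTi0.1
        omega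
  omega

private lemma samesign {n : ℕ} {l1 l2 : ℕ → ℤ} (hn : 4 ≤ n) (h : Interlacing n l1 l2)
    {i j i' j' : ℕ} (hi : 1 ≤ i) (hij : i < j) (hj : j ≤ n - 1)
    (hi' : 1 ≤ i') (hij' : i' < j') (hj' : j' ≤ n - 1)
    (hD : hBeta n l1 i j - hBeta n l2 i j = 2)
    (hD' : hBeta n l1 i' j' - hBeta n l2 i' j' = -2) : False := by
  rw [Ddef] at hD hD'
  have hjn : 1 ≤ j := by omega
  have hj'n : 1 ≤ j' := by omega
  have hn2 : n - 2 ≤ n - 1 := by omega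
  have hSj := (key hn h (n-2) hn2 j hjn).1
  have hSj' := (key hn h (n-2) hn2 j' hj'n).1
  rcases lt_trichotomy i i' with hc | hc | hc
  · have hsd := sumdiff (fun s => l1 s - l2 s) hn hc (by omega : i' ≤ n - 1)
    have hmid := (key hn h (i'-1) (by omega : i' - 1 ≤ n - 1) i hi).1
    omega
  · rw [hc] at hD
    omega
  · have hsd := sumdiff (fun s => l1 s - l2 s) hn hc (by omega : i ≤ n - 1)
    have hmid := (key hn h (i-1) (by omega : i - 1 ≤ n - 1) i' hi').1
    omega

private lemma coeffid {n : ℕ} (hn : 4 ≤ n) {i j i0 j0 : ℕ} (hi : 1 ≤ i) (hij : i < j)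
    (hj : j ≤ n - 1) (hi0 : 1 ≤ i0) (hij0 : i0 < j0) (hj0 : j0 ≤ n - 1)
    (hii0 : i ≤ i0) (hjj0 : j ≤ j0) (k : ℕ) :
    betaCoeff n i j k - betaCoeff n i0 j0 k = alphaCoeff i (i0-1) k + alphaCoeff j (j0-1) k := by
  unfold betaCoeff alphaCoeff
  split_ifs <;> omega

private lemma alphaA_eq {n a b : ℕ} (hb : b < n) (k : ℕ) :
    alphaCoeff a b k = alphaACoeff n a b k := by
  unfold alphaCoeff alphaACoeff
  rw [if_neg (by omega : ¬ b = n)]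

private lemma alphaEmpty {a b : ℕ} (hb : b < a) (k : ℕ) : alphaCoeff a b k = 0 := by
  unfold alphaCoeff
  rw [if_neg (by omega)]

/-- If `R(λ₁,λ₂) ≠ ∅` there is `β* ∈ R(λ₁,λ₂)` such that every `β ∈ R(λ₁,λ₂)` satisfies:
`β − β*` is zero, a positive root, or a sum of two positive roots. -/
theorem stmt8 (n : ℕ) (hn : 4 ≤ n) (l1 l2 : ℕ → ℤ) (h : Interlacing n l1 l2)
    (hne : ∃ i j, 1 ≤ i ∧ i < j ∧ j ≤ n - 1 ∧ |hBeta n l1 i j - hBeta n l2 i j| = 2) :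
    ∃ i0 j0, (1 ≤ i0 ∧ i0 < j0 ∧ j0 ≤ n - 1 ∧
        |hBeta n l1 i0 j0 - hBeta n l2 i0 j0| = 2) ∧
      ∀ i j, 1 ≤ i → i < j → j ≤ n - 1 → |hBeta n l1 i j - hBeta n l2 i j| = 2 →
        ((∀ k, betaCoeff n i j k - betaCoeff n i0 j0 k = 0) ∨
          IsPosRootD n (fun k => betaCoeff n i j k - betaCoeff n i0 j0 k) ∨
          ∃ f1 f2, IsPosRootD n f1 ∧ IsPosRootD n f2 ∧
            ∀ k, betaCoeff n i j k - betaCoeff n i0 j0 k = f1 k + f2 k) := by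
  classical
  obtain ⟨iw, jw, hiw, hijw, hjw, habsw⟩ := hne
  set P : ℕ → Prop :=
    fun i => ∃ j, 1 ≤ i ∧ i < j ∧ j ≤ n - 1 ∧ |hBeta n l1 i j - hBeta n l2 i j| = 2 with hP
  have hPiw : P iw := ⟨jw, hiw, hijw, hjw, habsw⟩
  have hiwn : iw ≤ n := by omega
  have hPi0 : P (Nat.findGreatest P n) := Nat.findGreatest_spec hiwn hPiw
  set i0 := Nat.findGreatest P n with hi0def
  obtain ⟨j1, h1a, h1b, h1c, h1d⟩ := hPi0
  set Q : ℕ → Prop :=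
    fun j => 1 ≤ i0 ∧ i0 < j ∧ j ≤ n - 1 ∧ |hBeta n l1 i0 j - hBeta n l2 i0 j| = 2 with hQ
  have hQj1 : Q j1 := ⟨h1a, h1b, h1c, h1d⟩
  have hj1n : j1 ≤ n := by omega
  have hQj0 : Q (Nat.findGreatest Q n) := Nat.findGreatest_spec hj1n hQj1
  set j0 := Nat.findGreatest Q n with hj0def
  obtain ⟨hq1, hq2, hq3, hq4⟩ := hQj0
  refine ⟨i0, j0, ⟨hq1, hq2, hq3, hq4⟩, ?_⟩
  intro i j hi hij hj habs
  have hin : i ≤ n := by omega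
  have hPij : P i := ⟨j, hi, hij, hj, habs⟩
  have hii0 : i ≤ i0 := Nat.le_findGreatest hin hPij
  have h2 : (0:ℤ) ≤ 2 := by norm_num
  have hcase := (abs_eq h2).1 habs
  have hcase0 := (abs_eq h2).1 hq4
  have hjj0 : j ≤ j0 := by
    by_contra hcj
    push_neg at hcj
    have hnew : |hBeta n l1 i0 j - hBeta n l2 i0 j| = 2 := by
      rcases hcase with ha | ha <;> rcases hcase0 with hb | hb
      · have hp := push hn h hi hij hj hq1 hq2 hq3 hii0 ha hb
        rw [hp]; norm_num
      · exact (samesign hn h hi hij hj hq1 hq2 hq3 ha hb).elim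
      · exact (samesign hn h hq1 hq2 hq3 hi hij hj hb ha).elim
      · have h' := swap h
        have ha' : hBeta n l2 i j - hBeta n l1 i j = 2 := by linarith
        have hb' : hBeta n l2 i0 j0 - hBeta n l1 i0 j0 = 2 := by linarith
        have hp := push hn h' hi hij hj hq1 hq2 hq3 hii0 ha' hb'
        have hval : hBeta n l1 i0 j - hBeta n l2 i0 j = -2 := by linarith
        rw [hval]; norm_num
    have hi0j : i0 < j := by omega
    have hjn : j ≤ n := by omega
    have hQj : Q j := ⟨hq1, hi0j, hj, hnew⟩
    have : j ≤ j0 := Nat.le_findGreatest hjn hQj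
    omega
  have hid := coeffid hn hi hij hj hq1 hq2 hq3 hii0 hjj0
  by_cases e1 : i = i0 <;> by_cases e2 : j = j0
  · left
    intro k
    rw [e1, e2]
    ring
  · right; left
    left
    have b1 : 1 ≤ j := by omega
    have b2 : j ≤ j0 - 1 := by omega
    have b3 : j0 - 1 ≤ n := by omega
    refine ⟨j, j0 - 1, b1, b2, b3, fun k => ?_⟩
    show betaCoeff n i j k - betaCoeff n i0 j0 k = alphaACoeff n j (j0 - 1) k
    rw [hid k, alphaEmpty (show i0 - 1 < i by omega) k,
      ← alphaA_eq (show j0 - 1 < n by omega) k]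
    ring
  · right; left
    left
    have b1 : 1 ≤ i := by omega
    have b2 : i ≤ i0 - 1 := by omega
    have b3 : i0 - 1 ≤ n := by omega
    refine ⟨i, i0 - 1, b1, b2, b3, fun k => ?_⟩
    show betaCoeff n i j k - betaCoeff n i0 j0 k = alphaACoeff n i (i0 - 1) k
    rw [hid k, alphaEmpty (show j0 - 1 < j by omega) k,
      ← alphaA_eq (show i0 - 1 < n by omega) k]
    ring
  · right; right
    refine ⟨alphaACoeff n i (i0 - 1), alphaACoeff n j (j0 - 1), ?_, ?_, fun k => ?_⟩
    · left
      exact ⟨i, i0 - 1, by omega, by omega, by omega, fun k => rfl⟩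
    · left
      exact ⟨j, j0 - 1, by omega, by omega, by omega, fun k => rfl⟩
    · rw [hid k, ← alphaA_eq (show i0 - 1 < n by omega) k,
        ← alphaA_eq (show j0 - 1 < n by omega) k]
end
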